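/- Every binary systematic code of dimension k ≥ 1 and minimum distance d ∈ {5, 6} satisfies the Griesmer bound: n ≥ ∑_{j=0}^{k-1} ⌈d/2^j⌉. -/

import Mathlib

open Finset

/-- `C` has minimum (Hamming) distance exactly `d`. -/
def minDistIs {n : ℕ} {A : Type*} [DecidableEq A] (C : Finset (Fin n → A)) (d : ℕ) : Prop :=
  (∀ x ∈ C, ∀ y ∈ C, x ≠ y → d ≤ hammingDist x y) ∧
    ∃ x ∈ C, ∃ y ∈ C, x ≠ y ∧ hammingDist x y = d

/-- `C` is systematic: projection onto the first `k` coordinates is a bijection onto `A^k`. -/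
def systematicOn {n k : ℕ} {A : Type*} (h : k ≤ n) (C : Finset (Fin n → A)) : Prop :=
  Set.BijOn (fun c (i : Fin k) => c (Fin.castLE h i)) (C : Set (Fin n → A)) Set.univ

/-- The Griesmer sum `∑_{j=0}^{k-1} ⌈d / q^j⌉`. -/
def griesmerSum (q d k : ℕ) : ℤ := ∑ j ∈ Finset.range k, ⌈(d : ℚ) / (q : ℚ) ^ j⌉

set_option maxRecDepth 40000

/-! ### Auxiliary definitions -/

/-- Head part of the Hamming distance (first `k` coordinates). -/
def Hd (k : ℕ) {n : ℕ} (x y : Fin n → Fin 2) : ℕ :=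
  ∑ i ∈ univ.filter (fun i : Fin n => i.val < k), if x i ≠ y i then 1 else 0

/-- Tail part of the Hamming distance (coordinates `≥ k`). -/
def Tl (k : ℕ) {n : ℕ} (x y : Fin n → Fin 2) : ℕ :=
  ∑ i ∈ univ.filter (fun i : Fin n => ¬ i.val < k), if x i ≠ y i then 1 else 0

/-- Overall parity of a binary word. -/
def par {n : ℕ} (x : Fin n → Fin 2) : ZMod 2 := ∑ i, ((x i).val : ZMod 2)

/-- The prefixes used for `k ≥ 3` (the 3-cube). -/
def v8 : Fin 8 → Fin 3 → Fin 2 := fun s a => ⟨s.val / 2 ^ a.val % 2, by omega⟩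

/-- The prefixes used for `k = 2` (the 2-cube). -/
def v4 : Fin 4 → Fin 2 → Fin 2 := fun s a => ⟨s.val / 2 ^ a.val % 2, by omega⟩

/-! ### Basic lemmas -/

lemma dist_split (k : ℕ) {n : ℕ} (x y : Fin n → Fin 2) :
    hammingDist x y = Hd k x y + Tl k x y := by
  have : hammingDist x y = ∑ i : Fin n, if x i ≠ y i then 1 else 0 := by
    rw [show hammingDist x y = (univ.filter fun i => x i ≠ y i).card from rfl,
      Finset.card_filter]
  rw [this, Hd, Tl, Finset.sum_filter_add_sum_filter_not]

lemma tailcard {n k : ℕ} :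
    (univ.filter fun i : Fin n => ¬ i.val < k).card = n - k := by
  rw [Finset.card_filter, Fin.sum_univ_eq_sum_range (fun j => if ¬ j < k then 1 else 0) n,
    ← Finset.card_filter]
  have : (Finset.range n).filter (fun j => ¬ j < k) = Finset.Ico k n := by
    ext j; simp [Finset.mem_filter, Finset.mem_Ico]; omega
  rw [this, Nat.card_Ico]

lemma par_ne {n : ℕ} (x y : Fin n → Fin 2) (h : ¬ 2 ∣ hammingDist x y) : par x ≠ par y := by
  have key : ((hammingDist x y : ℕ) : ZMod 2) = par x - par y := by
    rw [show hammingDist x y = ∑ i : Fin n, if x i ≠ y i then 1 else 0 by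
      rw [show hammingDist x y = (univ.filter fun i => x i ≠ y i).card from rfl,
        Finset.card_filter]]
    push_cast
    rw [par, par, ← Finset.sum_sub_distrib]
    refine Finset.sum_congr rfl fun i _ => ?_
    have : ∀ a b : Fin 2,
        (if a ≠ b then (1 : ZMod 2) else 0) = (a.val : ZMod 2) - (b.val : ZMod 2) := by decide
    exact this (x i) (y i)
  intro he
  rw [he, sub_self] at key
  exact h ((ZMod.natCast_eq_zero_iff _ 2).mp key)

lemma head_le {n k m : ℕ} (hm0 : 0 < m) (hkn : k ≤ n)
    (x y : Fin n → Fin 2) (a b : Fin m → Fin 2)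
    (hx : ∀ j : Fin k, x (Fin.castLE hkn j) = if h : j.val < m then a ⟨j.val, h⟩ else 0)
    (hy : ∀ j : Fin k, y (Fin.castLE hkn j) = if h : j.val < m then b ⟨j.val, h⟩ else 0) :
    Hd k x y ≤ hammingDist a b := by
  rw [Hd, ← Finset.card_filter, Finset.filter_filter,
    show hammingDist a b = (univ.filter fun i => a i ≠ b i).card from rfl]
  have key : ∀ i : Fin n, i.val < k → x i ≠ y i →
      i.val < m ∧ x i = a ⟨i.val % m, Nat.mod_lt _ hm0⟩ ∧ y i = b ⟨i.val % m, Nat.mod_lt _ hm0⟩ := by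
    intro i hik hxy
    have hci : Fin.castLE hkn (⟨i.val, hik⟩ : Fin k) = i := by
      apply Fin.ext; rfl
    have hxi := hx ⟨i.val, hik⟩
    have hyi := hy ⟨i.val, hik⟩
    rw [hci] at hxi hyi
    by_cases him : i.val < m
    · have hmod : i.val % m = i.val := Nat.mod_eq_of_lt him
      refine ⟨him, ?_, ?_⟩
      · rw [hxi, dif_pos him]; congr 1; exact Fin.ext hmod.symm
      · rw [hyi, dif_pos him]; congr 1; exact Fin.ext hmod.symm
    · rw [dif_neg him] at hxi hyi
      exact absurd (hxi.trans hyi.symm) hxy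
  apply Finset.card_le_card_of_injOn (fun i : Fin n => (⟨i.val % m, Nat.mod_lt _ hm0⟩ : Fin m))
  · intro i hi
    simp only [Finset.mem_coe, Finset.mem_filter, Finset.mem_univ, true_and] at hi ⊢
    obtain ⟨_, h1, h2⟩ := key i hi.1 hi.2
    rw [← h1, ← h2]; exact hi.2
  · intro i1 h1 i2 h2 he
    simp only [Finset.coe_filter, Set.mem_setOf_eq, Finset.mem_univ, true_and] at h1 h2
    obtain ⟨hm1, _, _⟩ := key i1 h1.1 h1.2
    obtain ⟨hm2, _, _⟩ := key i2 h2.1 h2.2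
    have : i1.val % m = i2.val % m := congrArg Fin.val he
    rw [Nat.mod_eq_of_lt hm1, Nat.mod_eq_of_lt hm2] at this
    exact Fin.ext this

/-! ### The main counting lemma (Plotkin-type argument on the tail) -/

lemma main_count {n k m M : ℕ} (hm0 : 0 < m) (hkn : k ≤ n)
    (v : Fin M → Fin m → Fin 2) (c : Fin M → Fin n → Fin 2)
    (hc : ∀ s (j : Fin k), c s (Fin.castLE hkn j) = if h : j.val < m then v s ⟨j.val, h⟩ else 0)
    (w : Fin M → Fin 2)
    (hpair : ∀ s t, s ≠ t →
      6 ≤ Hd k (c s) (c t) + Tl k (c s) (c t) + (if w s ≠ w t then 1 else 0))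
    (B V : ℕ)
    (hB : ∀ f : Fin M → Fin 2, (∑ s, ∑ t, if f s ≠ f t then 1 else 0) ≤ B)
    (hV : (∑ s, ∑ t, hammingDist (v s) (v t)) = V) :
    M * (6 * M - 6) ≤ V + B * (n - k) + (∑ s, ∑ t, if w s ≠ w t then 1 else 0) := by
  have l2 : ∀ s : Fin M, (∑ t : Fin M, if s = t then (0:ℕ) else 6) = 6 * M - 6 := by
    intro s
    have h1 : (∑ t : Fin M, ((if s = t then (0:ℕ) else 6) + (if s = t then 6 else 0))) = 6 * M := by
      have e : ∀ t : Fin M, ((if s = t then (0:ℕ) else 6) + (if s = t then 6 else 0)) = 6 := by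
        intro t; by_cases h : s = t <;> simp [h]
      simp only [e, Finset.sum_const, smul_eq_mul, Finset.card_univ, Fintype.card_fin]
      ring
    rw [Finset.sum_add_distrib] at h1
    have h2 : (∑ t : Fin M, if s = t then (6:ℕ) else 0) = 6 := by
      simp [Finset.sum_ite_eq]
    omega
  calc M * (6 * M - 6) = ∑ s : Fin M, ∑ t : Fin M, if s = t then (0:ℕ) else 6 := by
        simp only [l2, Finset.sum_const, smul_eq_mul, Finset.card_univ, Fintype.card_fin]
    _ ≤ ∑ s : Fin M, ∑ t : Fin M,
          (Hd k (c s) (c t) + Tl k (c s) (c t) + (if w s ≠ w t then 1 else 0)) := by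
        refine Finset.sum_le_sum fun s _ => Finset.sum_le_sum fun t _ => ?_
        by_cases h : s = t
        · simp [h]
        · simpa [h] using hpair s t h
    _ = (∑ s : Fin M, ∑ t : Fin M, Hd k (c s) (c t))
        + (∑ s : Fin M, ∑ t : Fin M, Tl k (c s) (c t))
        + (∑ s : Fin M, ∑ t : Fin M, if w s ≠ w t then 1 else 0) := by
        simp [Finset.sum_add_distrib]
    _ ≤ V + B * (n - k) + (∑ s : Fin M, ∑ t : Fin M, if w s ≠ w t then 1 else 0) := by
        gcongr ?_ + ?_ + _
        · rw [← hV]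
          exact Finset.sum_le_sum fun s _ => Finset.sum_le_sum fun t _ =>
            head_le hm0 hkn _ _ _ _ (hc s) (hc t)
        · have swap : (∑ s : Fin M, ∑ t : Fin M, Tl k (c s) (c t))
              = ∑ i ∈ univ.filter (fun i : Fin n => ¬ i.val < k),
                  ∑ s : Fin M, ∑ t : Fin M, (if c s i ≠ c t i then 1 else 0) := by
            have e1 : ∀ s : Fin M, (∑ t : Fin M, Tl k (c s) (c t))
                = ∑ i ∈ univ.filter (fun i : Fin n => ¬ i.val < k),
                    ∑ t : Fin M, (if c s i ≠ c t i then 1 else 0) := fun s => Finset.sum_comm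
            simp only [e1]
            exact Finset.sum_comm
          rw [swap]
          calc _ ≤ ∑ _i ∈ univ.filter (fun i : Fin n => ¬ i.val < k), B :=
                Finset.sum_le_sum fun i _ => hB (fun s => c s i)
            _ = B * (n - k) := by rw [Finset.sum_const, tailcard]; ring

/-! ### The glue lemma -/

lemma glue {n k m M B V d : ℕ} (hm0 : 0 < m) (hm : m ≤ k) (hkn : k ≤ n)
    (C : Finset (Fin n → Fin 2))
    (hsys : Set.BijOn (fun c (i : Fin k) => c (Fin.castLE hkn i))
      (C : Set (Fin n → Fin 2)) Set.univ)
    (hmin1 : ∀ x ∈ C, ∀ y ∈ C, x ≠ y → d ≤ hammingDist x y)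
    (v : Fin M → Fin m → Fin 2) (hvinj : Function.Injective v)
    (hB : ∀ f : Fin M → Fin 2, (∑ s, ∑ t, if f s ≠ f t then 1 else 0) ≤ B)
    (hV : (∑ s, ∑ t, hammingDist (v s) (v t)) = V)
    (hd : d = 5 ∨ d = 6) :
    M * (6 * M - 6) ≤ V + B * (n - k) + (if d = 5 then B else 0) := by
  classical
  set u : Fin M → (Fin k → Fin 2) :=
    fun s j => if h : j.val < m then v s ⟨j.val, h⟩ else 0 with hu
  have hex : ∀ s : Fin M, ∃ x, x ∈ C ∧ (fun i : Fin k => x (Fin.castLE hkn i)) = u s := by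
    intro s
    rcases hsys.2.2 (Set.mem_univ (u s)) with ⟨x, hx, hpx⟩
    exact ⟨x, hx, hpx⟩
  choose c hcmem hcproj using hex
  have hc : ∀ s (j : Fin k), c s (Fin.castLE hkn j) = if h : j.val < m then v s ⟨j.val, h⟩ else 0 :=
    fun s j => congrFun (hcproj s) j
  have hcne : ∀ s t : Fin M, s ≠ t → c s ≠ c t := by
    intro s t hst hcc
    apply hst
    apply hvinj
    funext a
    have ha : (a.val : ℕ) < m := a.2
    have hak : a.val < k := lt_of_lt_of_le ha hm
    have h1 := hc s ⟨a.val, hak⟩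
    rw [hcc, hc t ⟨a.val, hak⟩] at h1
    simp only [dif_pos ha] at h1
    simpa [Fin.eta] using h1.symm
  have hdist : ∀ s t : Fin M, s ≠ t → d ≤ hammingDist (c s) (c t) := fun s t hst =>
    hmin1 _ (hcmem s) _ (hcmem t) (hcne s t hst)
  rcases hd with h5 | h6
  · -- d = 5 : use the parity coordinate
    subst h5
    set w : Fin M → Fin 2 := fun s => if par (c s) = 1 then 1 else 0 with hw
    have hiff : ∀ a b : ZMod 2,
        ((if a = 1 then (1 : Fin 2) else 0) ≠ (if b = 1 then 1 else 0)) ↔ a ≠ b := by decide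
    have hpair : ∀ s t, s ≠ t →
        6 ≤ Hd k (c s) (c t) + Tl k (c s) (c t) + (if w s ≠ w t then 1 else 0) := by
      intro s t hst
      have hD := hdist s t hst
      have hsplit := dist_split k (c s) (c t)
      by_cases hdvd : 2 ∣ hammingDist (c s) (c t)
      · obtain ⟨r, hr⟩ := hdvd
        omega
      · have hne := par_ne _ _ hdvd
        have : w s ≠ w t := (hiff _ _).mpr hne
        rw [if_pos this]
        omega
    have hmain := main_count hm0 hkn v c hc w hpair B V hB hV
    have hWle : (∑ s, ∑ t, if w s ≠ w t then 1 else 0) ≤ B := hB w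
    norm_num
    omega
  · subst h6
    have hpair : ∀ s t, s ≠ t →
        6 ≤ Hd k (c s) (c t) + Tl k (c s) (c t)
          + (if (fun _ : Fin M => (0 : Fin 2)) s ≠ (fun _ => 0) t then 1 else 0) := by
      intro s t hst
      have hD := hdist s t hst
      have hsplit := dist_split k (c s) (c t)
      simp only [ne_eq, not_true_eq_false, if_false]
      omega
    have hmain := main_count hm0 hkn v c hc (fun _ => 0) hpair B V hB hV
    simpa using hmain

/-! ### Bounds on the Griesmer sum -/

lemma ceil_le' {d c : ℕ} (j : ℕ) (h : d ≤ c * 2 ^ j) :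
    ⌈(d : ℚ) / ((2:ℕ) : ℚ) ^ j⌉ ≤ (c : ℤ) := by
  rw [Int.ceil_le]
  rw [div_le_iff₀ (by positivity)]
  push_cast
  exact_mod_cast Nat.cast_le.mpr h

lemma g1 {d : ℕ} : griesmerSum 2 d 1 ≤ (d : ℤ) := by
  rw [griesmerSum, Finset.sum_range_one]
  simpa using ceil_le' (d := d) (c := d) 0 (by omega)

lemma g2 {d : ℕ} (hd : d ≤ 6) : griesmerSum 2 d 2 ≤ (d : ℤ) + 3 := by
  rw [griesmerSum, Finset.sum_range_succ, Finset.sum_range_one]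
  have h0 := ceil_le' (d := d) (c := d) 0 (by omega)
  have h1 := ceil_le' (d := d) (c := 3) 1 (by omega)
  push_cast at h0 h1 ⊢
  omega

lemma g3 {d : ℕ} (hd : d ≤ 6) {k : ℕ} (hk : 3 ≤ k) :
    griesmerSum 2 d k ≤ (k : ℤ) + d + 2 := by
  induction k, hk using Nat.le_induction with
  | base =>
    rw [griesmerSum, Finset.sum_range_succ, Finset.sum_range_succ, Finset.sum_range_one]
    have h0 := ceil_le' (d := d) (c := d) 0 (by omega)
    have h1 := ceil_le' (d := d) (c := 3) 1 (by omega)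
    have h2 := ceil_le' (d := d) (c := 2) 2 (by omega)
    push_cast at h0 h1 h2 ⊢
    omega
  | succ k hk ih =>
    rw [griesmerSum, Finset.sum_range_succ, ← griesmerSum]
    have h1 : ⌈(d : ℚ) / ((2:ℕ) : ℚ) ^ k⌉ ≤ (1 : ℤ) := by
      refine ceil_le' k ?_
      have : 2 ^ 3 ≤ 2 ^ k := Nat.pow_le_pow_right (by norm_num) hk
      simp only [one_mul]
      omega
    push_cast at h1 ⊢
    omega

/-! ### The theorem -/

theorem stmt13 {n k d : ℕ}
    (C : Finset (Fin n → Fin 2)) (hk : 1 ≤ k) (hkn : k ≤ n)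
    (hcard : C.card = 2 ^ k)
    (hsys : systematicOn hkn C)
    (hmin : minDistIs C d)
    (hd : d = 5 ∨ d = 6) :
    (n : ℤ) ≥ griesmerSum 2 d k := by
  have hd6 : d ≤ 6 := by rcases hd with h | h <;> omega
  rcases show k = 1 ∨ k = 2 ∨ 3 ≤ k by omega with hk1 | hk2 | hk3
  · -- k = 1
    subst hk1
    obtain ⟨x, hx, y, hy, hxy, hdxy⟩ := hmin.2
    have hle : hammingDist x y ≤ n := le_trans hammingDist_le_card_fintype (by simp)
    have : (d : ℤ) ≤ n := by exact_mod_cast hdxy ▸ hle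
    exact le_trans g1 this
  · -- k = 2
    subst hk2
    have H := glue (m := 2) (M := 4) (B := 8) (V := 16) (by norm_num) le_rfl hkn C hsys
      hmin.1 v4 (by decide) (by decide) (by decide) hd
    have hn : (d : ℤ) + 3 ≤ n := by
      rcases hd with h | h <;> subst h <;> norm_num at H ⊢ <;> push_cast <;> omega
    exact le_trans (g2 hd6) hn
  · -- k ≥ 3
    have H := glue (m := 3) (M := 8) (B := 32) (V := 96) (by norm_num) hk3 hkn C hsys
      hmin.1 v8 (by decide) (by decide) (by decide) hd
    have hn : (k : ℤ) + d + 2 ≤ n := by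
      rcases hd with h | h <;> subst h <;> norm_num at H ⊢ <;> push_cast <;> omega
    exact le_trans (g3 hd6 hk3) hn
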